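/- (Existence of the sign-pattern witness K_{I,v}.) Let K ⊆ ℝ^m be a nonempty closed convex polyhedron, I ⊆ {1,…,N}, v ∈ ℤ^m. There exists a closed convex set K_{I,v} ⊆ ℝ^m such that for every sign vector s ∈ {+,−,0}^m: s ∈ 𝕊_{K,I,v} if and only if K_{I,v} ∩ 𝔹_s ≠ ∅; and furthermore K_{I,v} ∩ 𝔹_s ≠ ∅ implies K_{I,v} ∩ Int(𝔹_s) ≠ ∅. -/

import Mathlib

open Pointwise
open scoped Classical

noncomputable section

/-- The box `𝔹 = ∏ᵢ [−η_i/2, η_i/2]`. -/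
def boxB {m : ℕ} (η : Fin m → ℝ) : Set (Fin m → ℝ) :=
  {x | ∀ i, -(η i) / 2 ≤ x i ∧ x i ≤ η i / 2}

/-- The coordinate cone `σ_s` associated to a sign vector `s`. -/
def sigmaCone {m : ℕ} (s : Fin m → SignType) : Set (Fin m → ℝ) :=
  {x | ∀ i, (s i = 1 → 0 ≤ x i) ∧ (s i = -1 → x i ≤ 0) ∧ (s i = 0 → x i = 0)}

/-- The shift `δ_s`, whose `i`-th coordinate is `η_i`, `−η_i`, `0` according as
`s_i = +, −, 0`. -/
def deltaS {m : ℕ} (η : Fin m → ℝ) (s : Fin m → SignType) : Fin m → ℝ :=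
  fun i => (s i : ℝ) * η i

/-- The thick cone `𝔹_s = 𝔹 + σ_s + δ_s`. -/
def thickCone {m : ℕ} (η : Fin m → ℝ) (s : Fin m → SignType) :
    Set (Fin m → ℝ) :=
  {x | ∃ bb ∈ boxB η, ∃ c ∈ sigmaCone s, x = bb + c + deltaS η s}

/-- The cone `τ_I` generated by `{e_j : j ∈ I}`. -/
def tauCone {N : ℕ} (I : Finset (Fin N)) : Set (Fin N → ℝ) :=
  {x | ∀ j, 0 ≤ x j ∧ (j ∉ I → x j = 0)}

/-- `K(I) = K + π(e_I) + π(τ_I)`. -/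
def KofI {N m : ℕ} (π : (Fin N → ℝ) →ₗ[ℝ] (Fin m → ℝ)) (K : Set (Fin m → ℝ))
    (I : Finset (Fin N)) : Set (Fin m → ℝ) :=
  {y | ∃ kk ∈ K, ∃ t ∈ tauCone I,
    y = kk + π (fun j => if j ∈ I then (1 : ℝ) else 0) + π t}

/-- `I ∈ ℐ(K, v)`, i.e. `K(I) ∩ (v + 𝔹) ≠ ∅`. -/
def memIdx {N m : ℕ} (π : (Fin N → ℝ) →ₗ[ℝ] (Fin m → ℝ)) (η : Fin m → ℝ)
    (K : Set (Fin m → ℝ)) (v : Fin m → ℤ) (I : Finset (Fin N)) : Prop :=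
  (KofI π K I ∩ {x | ∃ bb ∈ boxB η, x = (fun i => (v i : ℝ)) + bb}).Nonempty

/-- The sign pattern `𝕊_{K,I,v}`: sign vectors `s` with `K(I) ∩ (v + 𝔹_s) ≠ ∅`
such that `s_i ≠ −` whenever `I ∩ B_i^+ ≠ ∅` and `s_i ≠ +` whenever
`I ∩ B_i^- ≠ ∅`. -/
def signPattern {N m : ℕ} (blk : Fin N → Fin m) (b : Fin N → ℤ)
    (π : (Fin N → ℝ) →ₗ[ℝ] (Fin m → ℝ)) (η : Fin m → ℝ)
    (K : Set (Fin m → ℝ)) (I : Finset (Fin N)) (v : Fin m → ℤ) :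
    Set (Fin m → SignType) :=
  {s | (KofI π K I ∩
          {x | ∃ bb ∈ thickCone η s, x = (fun i => (v i : ℝ)) + bb}).Nonempty ∧
    ∀ i, ((∃ j ∈ I, blk j = i ∧ 0 < b j) → s i ≠ -1) ∧
         ((∃ j ∈ I, blk j = i ∧ b j < 0) → s i ≠ 1)}

/-- Coordinate intervals of the thick cone. -/
def Jset (s : SignType) (e : ℝ) : Set ℝ :=
  if s = 1 then Set.Ici (e / 2) else if s = -1 then Set.Iic (-e / 2)
  else Set.Icc (-e / 2) (e / 2)

theorem thickCone_eq_pi {m : ℕ} (η : Fin m → ℝ) (hη : ∀ i, 0 < η i) (s : Fin m → SignType) :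
    thickCone η s = Set.pi Set.univ (fun i => Jset (s i) (η i)) := by
  ext x
  simp only [Set.mem_pi, Set.mem_univ, forall_true_left, true_implies]
  constructor
  · rintro ⟨bb, hbb, cc, hcc, rfl⟩
    intro i
    obtain ⟨h1, h2⟩ := hbb i
    have hc := hcc i
    simp only [Pi.add_apply, deltaS]
    rcases hs : s i with h | h | h
    · have h0 := hc.2.2 hs
      simp [Jset, hs, h0]
      constructor <;> linarith
    · have h0 := hc.2.1 hs
      simp [Jset, hs]
      linarith
    · have h0 := hc.1 hs
      simp [Jset, hs]
      linarith
  · intro hx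
    refine ⟨fun i => if s i = 1 then min (x i - η i) (η i / 2)
        else if s i = -1 then max (x i + η i) (-(η i) / 2) else x i, ?_,
      fun i => if s i = 1 then x i - η i - min (x i - η i) (η i / 2)
        else if s i = -1 then x i + η i - max (x i + η i) (-(η i) / 2) else 0, ?_, ?_⟩
    · intro i
      have hxi := hx i
      have hp := hη i
      rcases hs : s i with h | h | h
      · simp [Jset, hs] at hxi ⊢
        constructor <;> linarith [hxi.1, hxi.2]
      · simp [Jset, hs] at hxi ⊢
        constructor <;> first
          | linarith
          | (constructor <;> linarith)
          | (left; linarith)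
          | (right; linarith)
      · simp [Jset, hs] at hxi ⊢
        constructor <;> first
          | linarith
          | (constructor <;> linarith)
          | (left; linarith)
          | (right; linarith)
    · intro i
      have hxi := hx i
      have hp := hη i
      rcases hs : s i with h | h | h
      · refine ⟨fun hh => ?_, fun hh => ?_, fun _ => ?_⟩
        · first | exact absurd hh (by decide) | (rw [hs] at hh; exact absurd hh (by decide))
        · first | exact absurd hh (by decide) | (rw [hs] at hh; exact absurd hh (by decide))
        · simp [hs]
      · simp [Jset, hs] at hxi
        refine ⟨fun hh => ?_, fun _ => ?_, fun hh => ?_⟩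
        · first | exact absurd hh (by decide) | (rw [hs] at hh; exact absurd hh (by decide))
        · first
            | (simp [hs]; done)
            | (simp [hs]; linarith [le_max_left (x i + η i) (-(η i) / 2)])
        · first | exact absurd hh (by decide) | (rw [hs] at hh; exact absurd hh (by decide))
      · simp [Jset, hs] at hxi
        refine ⟨fun _ => ?_, fun hh => ?_, fun hh => ?_⟩
        · first
            | (simp [hs]; done)
            | (simp [hs]; linarith [min_le_left (x i - η i) (η i / 2)])
        · first | exact absurd hh (by decide) | (rw [hs] at hh; exact absurd hh (by decide))
        · first | exact absurd hh (by decide) | (rw [hs] at hh; exact absurd hh (by decide))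
    · funext i
      simp only [Pi.add_apply, deltaS]
      rcases hs : s i with h | h | h <;> simp [hs] <;> ring

theorem mem_thickCone {m : ℕ} (η : Fin m → ℝ) (hη : ∀ i, 0 < η i)
    (s : Fin m → SignType) (x : Fin m → ℝ) :
    x ∈ thickCone η s ↔ ∀ i,
      (s i = 1 → η i / 2 ≤ x i) ∧ (s i = -1 → x i ≤ -(η i) / 2) ∧
      (s i = 0 → -(η i) / 2 ≤ x i ∧ x i ≤ η i / 2) := by
  rw [thickCone_eq_pi η hη s]
  simp only [Set.mem_pi, Set.mem_univ, true_implies]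
  constructor
  · intro h i
    have hh := h i
    rcases hs : s i with h' | h' | h'
    · simp [Jset, hs] at hh
      refine ⟨fun hc => ?_, fun hc => ?_, fun _ => ?_⟩
      · first | exact absurd hc (by decide) | (rw [hs] at hc; exact absurd hc (by decide))
      · first | exact absurd hc (by decide) | (rw [hs] at hc; exact absurd hc (by decide))
      · constructor <;> linarith [hh.1, hh.2]
    · simp [Jset, hs] at hh
      refine ⟨fun hc => ?_, fun _ => by linarith, fun hc => ?_⟩
      · first | exact absurd hc (by decide) | (rw [hs] at hc; exact absurd hc (by decide))
      · first | exact absurd hc (by decide) | (rw [hs] at hc; exact absurd hc (by decide))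
    · simp [Jset, hs] at hh
      refine ⟨fun _ => by linarith, fun hc => ?_, fun hc => ?_⟩
      · first | exact absurd hc (by decide) | (rw [hs] at hc; exact absurd hc (by decide))
      · first | exact absurd hc (by decide) | (rw [hs] at hc; exact absurd hc (by decide))
  · intro h i
    obtain ⟨h1, h2, h3⟩ := h i
    rcases hs : s i with h' | h' | h'
    · have := h3 hs
      simp [Jset, hs]
      constructor <;> linarith [this.1, this.2]
    · have := h2 hs
      simp [Jset, hs]
      linarith
    · have := h1 hs
      simp [Jset, hs]
      linarith

theorem mem_interior_thickCone {m : ℕ} (η : Fin m → ℝ) (hη : ∀ i, 0 < η i)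
    (s : Fin m → SignType) (x : Fin m → ℝ) :
    x ∈ interior (thickCone η s) ↔ ∀ i,
      (s i = 1 → η i / 2 < x i) ∧ (s i = -1 → x i < -(η i) / 2) ∧
      (s i = 0 → -(η i) / 2 < x i ∧ x i < η i / 2) := by
  rw [thickCone_eq_pi η hη s, interior_pi_set Set.finite_univ]
  simp only [Set.mem_pi, Set.mem_univ, true_implies]
  constructor
  · intro h i
    have hh := h i
    rcases hs : s i with h' | h' | h'
    · simp [Jset, hs, interior_Icc] at hh
      refine ⟨fun hc => ?_, fun hc => ?_, fun _ => ?_⟩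
      · first | exact absurd hc (by decide) | (rw [hs] at hc; exact absurd hc (by decide))
      · first | exact absurd hc (by decide) | (rw [hs] at hc; exact absurd hc (by decide))
      · constructor <;> linarith [hh.1, hh.2]
    · simp [Jset, hs, interior_Iic] at hh
      refine ⟨fun hc => ?_, fun _ => by linarith, fun hc => ?_⟩
      · first | exact absurd hc (by decide) | (rw [hs] at hc; exact absurd hc (by decide))
      · first | exact absurd hc (by decide) | (rw [hs] at hc; exact absurd hc (by decide))
    · simp [Jset, hs, interior_Ici] at hh
      refine ⟨fun _ => by linarith, fun hc => ?_, fun hc => ?_⟩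
      · first | exact absurd hc (by decide) | (rw [hs] at hc; exact absurd hc (by decide))
      · first | exact absurd hc (by decide) | (rw [hs] at hc; exact absurd hc (by decide))
  · intro h i
    obtain ⟨h1, h2, h3⟩ := h i
    rcases hs : s i with h' | h' | h'
    · have := h3 hs
      simp [Jset, hs, interior_Icc]
      constructor <;> linarith [this.1, this.2]
    · have := h2 hs
      simp [Jset, hs, interior_Iic]
      linarith
    · have := h1 hs
      simp [Jset, hs, interior_Ici]
      linarith

theorem isClosed_coneOf {κ ι : Type*} [Fintype κ] [Fintype ι] (g : κ → (ι → ℝ)) (S : Finset κ) :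
    IsClosed {x : ι → ℝ | ∃ c : κ → ℝ, (∀ l, 0 ≤ c l) ∧ x = ∑ l ∈ S, c l • g l} := by
  induction S using Finset.strongInduction with
  | _ S ih =>
  by_cases hLI : LinearIndependent ℝ (fun l : {x // x ∈ S} => g l)
  · -- linear independent case: closed embedding image of the orthant
    let φ : ({x // x ∈ S} → ℝ) →ₗ[ℝ] (ι → ℝ) :=
      { toFun := fun c => ∑ i : {x // x ∈ S}, c i • g ↑i
        map_add' := by
          intro a b
          simp [add_smul, Finset.sum_add_distrib]
        map_smul' := by
          intro r a
          simp [smul_smul, Finset.smul_sum] }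
    have hker : LinearMap.ker φ = ⊥ := by
      rw [LinearMap.ker_eq_bot']
      intro c hc
      have := (Fintype.linearIndependent_iff.mp hLI) c hc
      funext i; exact this i
    have hemb := LinearMap.isClosedEmbedding_of_injective hker
    have himg : IsClosed (⇑φ '' {c | ∀ l, 0 ≤ c l}) := by
      apply hemb.isClosedMap
      have : {c : {x // x ∈ S} → ℝ | ∀ l, 0 ≤ c l} = ⋂ l, {c | 0 ≤ c l} := by
        ext c; simp [Set.mem_iInter]
      rw [this]
      exact isClosed_iInter fun l => isClosed_le continuous_const (continuous_apply l)
    have hset : {x : ι → ℝ | ∃ c : κ → ℝ, (∀ l, 0 ≤ c l) ∧ x = ∑ l ∈ S, c l • g l}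
        = ⇑φ '' {c | ∀ l, 0 ≤ c l} := by
      ext x
      constructor
      · rintro ⟨c, hc, rfl⟩
        refine ⟨fun i => c ↑i, fun l => hc _, ?_⟩
        show ∑ i : {x // x ∈ S}, c ↑i • g ↑i = _
        rw [Finset.sum_coe_sort S (fun k => c k • g k)]
      · rintro ⟨c, hc, rfl⟩
        refine ⟨fun k => if h : k ∈ S then c ⟨k, h⟩ else 0, ?_, ?_⟩
        · intro l
          by_cases h : l ∈ S
          · simpa [h] using hc ⟨l, h⟩
          · simp [h]
        · show _ = ∑ l ∈ S, (if h : l ∈ S then c ⟨l, h⟩ else 0) • g l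
          rw [← Finset.sum_coe_sort S (fun k => (if h : k ∈ S then c ⟨k, h⟩ else 0) • g k)]
          apply Finset.sum_congr rfl
          intro i _
          simp
    rw [hset]; exact himg
  · -- dependent case: union over erased index sets
    obtain ⟨μ, hμ0, i₀, hi₀⟩ := Fintype.not_linearIndependent_iff.mp hLI
    -- wlog μ i₀ > 0
    obtain ⟨μ, hμ0, i₀, hi₀⟩ : ∃ μ : {x // x ∈ S} → ℝ,
        (∑ i : {x // x ∈ S}, μ i • g ↑i = 0) ∧ ∃ i, 0 < μ i := by
      rcases lt_or_gt_of_ne hi₀ with h | h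
      · exact ⟨-μ, by simpa using hμ0, i₀, by simpa using h⟩
      · exact ⟨μ, hμ0, i₀, h⟩
    set T : Set {x // x ∈ S} := {i | 0 < μ i} with hT
    have key : {x : ι → ℝ | ∃ c : κ → ℝ, (∀ l, 0 ≤ c l) ∧ x = ∑ l ∈ S, c l • g l}
        = ⋃ i ∈ T,
            {x : ι → ℝ | ∃ c : κ → ℝ, (∀ l, 0 ≤ c l) ∧ x = ∑ l ∈ S.erase ↑i, c l • g l} := by
      ext x
      simp only [Set.mem_iUnion, Set.mem_setOf_eq]
      constructor
      · rintro ⟨c, hc, rfl⟩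
        -- find minimizer of c l / μ l over positive μ
        have hTne : T.toFinset.Nonempty := by
          refine ⟨i₀, ?_⟩; simp [hT, hi₀]
        obtain ⟨l₀, hl₀mem, hl₀min⟩ :=
          Finset.exists_min_image T.toFinset (fun i : {x // x ∈ S} => c ↑i / μ i) hTne
        have hl₀pos : 0 < μ l₀ := by simpa [hT] using hl₀mem
        set t : ℝ := c ↑l₀ / μ l₀ with ht
        have htnn : 0 ≤ t := div_nonneg (hc _) hl₀pos.le
        refine ⟨l₀, hl₀pos, fun k => if h : k ∈ S then c k - t * μ ⟨k, h⟩ else 0, ?_, ?_⟩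
        · intro l
          by_cases h : l ∈ S
          · simp only [h, dif_pos]
            rcases le_or_gt (μ ⟨l, h⟩) 0 with hm | hm
            · nlinarith [hc l]
            · have h2 := hl₀min ⟨l, h⟩ (by simpa [hT] using hm)
              have h3 : t * μ ⟨l, h⟩ ≤ c l := by
                have := mul_le_mul_of_nonneg_right h2 hm.le
                rwa [div_mul_cancel₀ _ hm.ne'] at this
              linarith
          · simp [h]
        · -- sum identity
          have hrel : ∑ l ∈ S, (fun k => if h : k ∈ S then μ ⟨k, h⟩ else 0) l • g l = 0 := by
            rw [← Finset.sum_coe_sort S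
              (fun k => (fun kk => if h : kk ∈ S then μ ⟨kk, h⟩ else 0) k • g k)]
            rw [← hμ0]
            apply Finset.sum_congr rfl
            intro i _
            simp
          have hsum : ∑ l ∈ S, (fun k => if h : k ∈ S then c k - t * μ ⟨k, h⟩ else 0) l • g l
              = ∑ l ∈ S, c l • g l := by
            have : ∀ l ∈ S, (fun k => if h : k ∈ S then c k - t * μ ⟨k, h⟩ else 0) l • g l
                = c l • g l - t • ((fun k => if h : k ∈ S then μ ⟨k, h⟩ else 0) l • g l) := by
              intro l hl
              simp only [hl, dif_pos]
              rw [sub_smul, smul_smul]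
            rw [Finset.sum_congr rfl this, Finset.sum_sub_distrib, ← Finset.smul_sum, hrel,
              smul_zero, sub_zero]
          rw [← hsum]
          have hzero : (fun k => if h : k ∈ S then c k - t * μ ⟨k, h⟩ else 0) (↑l₀) • g ↑l₀ = 0 := by
            have : (l₀ : κ) ∈ S := l₀.2
            simp only [this, dif_pos]
            have : c ↑l₀ - t * μ ⟨↑l₀, this⟩ = 0 := by
              rw [ht]; field_simp; ring
            rw [this, zero_smul]
          rw [← Finset.sum_erase_add S _ l₀.2, hzero, add_zero]
      · rintro ⟨i, _, c, hc, rfl⟩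
        refine ⟨fun k => if k = ↑i then 0 else c k, ?_, ?_⟩
        · intro l; by_cases h : l = ↑i <;> simp [h, hc l]
        · rw [← Finset.sum_erase_add S _ i.2]
          have h1 : ∑ l ∈ S.erase ↑i, (if l = (↑i:κ) then (0:ℝ) else c l) • g l
              = ∑ l ∈ S.erase ↑i, c l • g l :=
            Finset.sum_congr rfl fun l hl => by rw [if_neg (Finset.ne_of_mem_erase hl)]
          simp only []
          rw [h1]
          simp
    rw [key]
    apply Set.Finite.isClosed_biUnion (Set.toFinite T)
    intro i hi
    exact ih (S.erase ↑i) (Finset.erase_ssubset i.2)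

/-- Approximate feasibility of a finite linear inequality system implies feasibility. -/
theorem feas {α ι : Type*} [Fintype α] [Fintype ι] (F : ι → ((α → ℝ) →ₗ[ℝ] ℝ)) (d : ι → ℝ)
    (h : ∀ δ : ℝ, 0 < δ → ∃ y, ∀ l, F l y ≤ d l + δ) : ∃ y, ∀ l, F l y ≤ d l := by
  classical
  -- the set of right-hand sides making the system feasible is a f.g. cone, hence closed
  set g : (α ⊕ α ⊕ ι) → (ι → ℝ) := fun k =>
    Sum.elim (fun a => fun l => F l (Pi.single a 1))
      (Sum.elim (fun a => fun l => -(F l (Pi.single a 1))) (fun l₀ => Pi.single l₀ 1)) k with hg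
  have hclosed := isClosed_coneOf g Finset.univ
  set D := {x : ι → ℝ | ∃ c : (α ⊕ α ⊕ ι) → ℝ, (∀ l, 0 ≤ c l) ∧ x = ∑ l ∈ Finset.univ, c l • g l}
    with hD
  -- semantic description of D
  have hmem : ∀ x : ι → ℝ, x ∈ D ↔ ∃ y : α → ℝ, ∀ l, F l y ≤ x l := by
    intro x
    have hdecomp : ∀ y : α → ℝ, (fun l => F l y) =
        ∑ a : α, y a • (fun l => F l (Pi.single a 1)) := by
      intro y
      funext l
      rw [Finset.sum_apply]
      have : y = ∑ a : α, y a • (Pi.single a (1:ℝ) : α → ℝ) := by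
        rw [← Finset.univ_sum_single y]
        apply Finset.sum_congr rfl
        intro a _
        funext j
        by_cases h : j = a <;> simp [Pi.single_apply, h]
      conv_lhs => rw [this]
      rw [map_sum]
      simp [map_smul]
    constructor
    · rintro ⟨c, hc, rfl⟩
      refine ⟨fun a => c (Sum.inl a) - c (Sum.inr (Sum.inl a)), fun l => ?_⟩
      have : (∑ k ∈ Finset.univ, c k • g k) l
          = F l (fun a => c (Sum.inl a) - c (Sum.inr (Sum.inl a))) + c (Sum.inr (Sum.inr l)) := by
        rw [Finset.sum_apply]
        rw [Fintype.sum_sum_type]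
        rw [Fintype.sum_sum_type]
        have e1 : (fun a => c (Sum.inl a) - c (Sum.inr (Sum.inl a)))
            = (fun a => c (Sum.inl a)) - (fun a => c (Sum.inr (Sum.inl a))) := rfl
        have hFy := hdecomp (fun a => c (Sum.inl a) - c (Sum.inr (Sum.inl a)))
        have : F l (fun a => c (Sum.inl a) - c (Sum.inr (Sum.inl a)))
            = ∑ a : α, (c (Sum.inl a) - c (Sum.inr (Sum.inl a))) * F l (Pi.single a 1) := by
          have := congrFun hFy l
          rw [this, Finset.sum_apply]
          simp [smul_eq_mul]
        rw [this]
        simp only [hg, Sum.elim_inl, Sum.elim_inr, Pi.smul_apply, smul_eq_mul, Pi.neg_apply]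
        have hsing : ∑ l₀ : ι, c (Sum.inr (Sum.inr l₀)) * (Pi.single l₀ (1:ℝ) : ι → ℝ) l
            = c (Sum.inr (Sum.inr l)) := by
          rw [Finset.sum_eq_single l]
          · simp
          · intro b _ hb; simp [Pi.single_apply, hb]
          · intro hI; exact absurd (Finset.mem_univ l) hI
        rw [hsing]
        simp only [sub_mul, Finset.sum_sub_distrib, mul_neg, Finset.sum_neg_distrib]
        ring
      rw [this]
      have := hc (Sum.inr (Sum.inr l))
      linarith
    · rintro ⟨y, hy⟩
      refine ⟨Sum.elim (fun a => max (y a) 0)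
        (Sum.elim (fun a => max (-(y a)) 0) (fun l => x l - F l y)), ?_, ?_⟩
      · rintro (a | a | l) <;> simp [le_max_iff, sub_nonneg, hy]
      · funext l
        rw [Finset.sum_apply, Fintype.sum_sum_type, Fintype.sum_sum_type]
        simp only [hg, Sum.elim_inl, Sum.elim_inr, Pi.smul_apply, smul_eq_mul, Pi.neg_apply]
        have hsing : ∑ l₀ : ι, (x l₀ - F l₀ y) * (Pi.single l₀ (1:ℝ) : ι → ℝ) l = x l - F l y := by
          rw [Finset.sum_eq_single l]
          · simp
          · intro b _ hb; simp [Pi.single_apply, hb]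
          · intro hI; exact absurd (Finset.mem_univ l) hI
        rw [hsing]
        have hFl : F l y = ∑ a : α, y a * F l (Pi.single a 1) := by
          have := congrFun (hdecomp y) l
          rw [this, Finset.sum_apply]; simp [smul_eq_mul]
        have : ∑ a : α, max (y a) 0 * F l (Pi.single a 1)
            + ∑ a : α, max (-(y a)) 0 * -(F l (Pi.single a 1)) = F l y := by
          rw [hFl, ← Finset.sum_add_distrib]
          apply Finset.sum_congr rfl
          intro a _
          have h1 : (max (y a) 0 - max (-(y a)) 0) * F l (Pi.single a 1)
              = y a * F l (Pi.single a 1) := by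
            rw [max_zero_sub_eq_self]
          rw [sub_mul] at h1
          simp only [mul_neg]
          linarith [h1]
        linarith [this]
  -- now take the limit
  have hlim : Filter.Tendsto (fun n : ℕ => (fun l => d l + 1 / ((n:ℝ) + 1) : ι → ℝ))
      Filter.atTop (nhds d) := by
    rw [tendsto_pi_nhds]
    intro l
    have h1 : Filter.Tendsto (fun n : ℕ => (1 / ((n:ℝ) + 1))) Filter.atTop (nhds 0) :=
      tendsto_one_div_add_atTop_nhds_zero_nat
    simpa using (tendsto_const_nhds (x := d l) (f := Filter.atTop (α := ℕ))).add h1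
  have hmemD : ∀ n : ℕ, (fun l => d l + 1 / ((n:ℝ) + 1) : ι → ℝ) ∈ D := by
    intro n
    rw [hmem]
    obtain ⟨y, hy⟩ := h (1 / ((n:ℝ) + 1)) (by positivity)
    exact ⟨y, fun l => hy l⟩
  have : d ∈ D := hclosed.mem_of_tendsto hlim (Filter.Eventually.of_forall hmemD)
  rw [hmem] at this
  exact this

section KeySection

open Pointwise
open scoped Classical

/-- `K(I) − v` reparametrized: `z ∈ A0set` iff `v + z ∈ K(I)`. -/
def A0set {N m : ℕ} (π : (Fin N → ℝ) →ₗ[ℝ] (Fin m → ℝ)) (K : Set (Fin m → ℝ))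
    (I : Finset (Fin N)) (v : Fin m → ℤ) : Set (Fin m → ℝ) :=
  {z | (fun i => (v i : ℝ)) + z ∈ KofI π K I}

def Cset {m : ℕ} (η : Fin m → ℝ) (ε : ℝ) (P M : Fin m → Prop) : Set (Fin m → ℝ) :=
  {z | ∀ i, (P i → -(η i) / 2 + ε ≤ z i) ∧ (M i → z i ≤ η i / 2 - ε)}

def Bslack {m : ℕ} (η : Fin m → ℝ) (s : Fin m → SignType) (γ : ℝ) : Set (Fin m → ℝ) :=
  {z | ∀ i, (s i = 1 → η i / 2 - γ ≤ z i) ∧ (s i = -1 → z i ≤ -(η i) / 2 + γ) ∧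
      (s i = 0 → -(η i) / 2 - γ ≤ z i ∧ z i ≤ η i / 2 + γ)}

theorem Bslack_mono {m : ℕ} (η : Fin m → ℝ) (s : Fin m → SignType) {γ γ' : ℝ} (h : γ ≤ γ') :
    Bslack η s γ ⊆ Bslack η s γ' := by
  intro z hz i
  obtain ⟨h1, h2, h3⟩ := hz i
  exact ⟨fun hc => by linarith [h1 hc], fun hc => by linarith [h2 hc],
    fun hc => ⟨by linarith [(h3 hc).1], by linarith [(h3 hc).2]⟩⟩

theorem Bslack_zero {m : ℕ} (η : Fin m → ℝ) (hη : ∀ i, 0 < η i) (s : Fin m → SignType) :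
    Bslack η s 0 = thickCone η s := by
  ext z
  rw [mem_thickCone η hη s z]
  constructor
  · intro h i
    obtain ⟨h1, h2, h3⟩ := h i
    exact ⟨fun hc => by linarith [h1 hc], fun hc => by linarith [h2 hc],
      fun hc => ⟨by linarith [(h3 hc).1], by linarith [(h3 hc).2]⟩⟩
  · intro h i
    obtain ⟨h1, h2, h3⟩ := h i
    exact ⟨fun hc => by linarith [h1 hc], fun hc => by linarith [h2 hc],
      fun hc => ⟨by linarith [(h3 hc).1], by linarith [(h3 hc).2]⟩⟩

theorem mem_A0set_iff {N m : ℕ} (π : (Fin N → ℝ) →ₗ[ℝ] (Fin m → ℝ)) (K : Set (Fin m → ℝ))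
    (I : Finset (Fin N)) (v : Fin m → ℤ) (z : Fin m → ℝ) :
    z ∈ A0set π K I v ↔ ∃ t ∈ tauCone I,
      ((fun i => (v i : ℝ)) + z - π (fun j => if j ∈ I then (1 : ℝ) else 0) - π t ∈ K) := by
  unfold A0set KofI
  simp only [Set.mem_setOf_eq]
  constructor
  · rintro ⟨kk, hkk, t, ht, heq⟩
    refine ⟨t, ht, ?_⟩
    have : (fun i => (v i : ℝ)) + z - π (fun j => if j ∈ I then (1 : ℝ) else 0) - π t = kk := by
      rw [heq]; abel
    rw [this]; exact hkk
  · rintro ⟨t, ht, hk⟩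
    exact ⟨_, hk, t, ht, by abel⟩

/-- The key compactness-free "limit of feasible systems is feasible" statement,
specialized to our constraint system. -/
theorem KEY {N m n : ℕ} (π : (Fin N → ℝ) →ₗ[ℝ] (Fin m → ℝ))
    (f : Fin n → ((Fin m → ℝ) →ₗ[ℝ] ℝ)) (c : Fin n → ℝ)
    (I : Finset (Fin N)) (v : Fin m → ℤ) (η : Fin m → ℝ) (ε₁ : ℝ)
    (P M : Fin m → Prop) (s : Fin m → SignType) (γ : ℝ) (hγ : 0 ≤ γ)
    (h : ∀ δ : ℝ, 0 < δ →
      (A0set π {x | ∀ j, f j x ≤ c j} I v ∩ Cset η ε₁ P M ∩ Bslack η s (γ + δ)).Nonempty) :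
    (A0set π {x | ∀ j, f j x ≤ c j} I v ∩ Cset η ε₁ P M ∩ Bslack η s γ).Nonempty := by
  classical
  set K : Set (Fin m → ℝ) := {x | ∀ j, f j x ≤ c j} with hKdef
  set vR : Fin m → ℝ := fun i => (v i : ℝ) with hvR
  set eI : Fin N → ℝ := fun j => if j ∈ I then (1 : ℝ) else 0 with heI
  set Z : ((Fin m ⊕ Fin N) → ℝ) →ₗ[ℝ] (Fin m → ℝ) := LinearMap.funLeft ℝ ℝ Sum.inl with hZ
  set T : ((Fin m ⊕ Fin N) → ℝ) →ₗ[ℝ] (Fin N → ℝ) := LinearMap.funLeft ℝ ℝ Sum.inr with hT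
  set F : (Fin n ⊕ ((Fin N ⊕ Fin N) ⊕ ((Fin m ⊕ Fin m) ⊕ (Fin m ⊕ Fin m)))) →
      (((Fin m ⊕ Fin N) → ℝ) →ₗ[ℝ] ℝ) := fun l =>
    match l with
    | Sum.inl j' => ((f j').comp Z) - ((f j').comp (π.comp T))
    | Sum.inr (Sum.inl (Sum.inl j)) => -((LinearMap.proj j).comp T)
    | Sum.inr (Sum.inl (Sum.inr j)) => if j ∈ I then 0 else (LinearMap.proj j).comp T
    | Sum.inr (Sum.inr (Sum.inl (Sum.inl i))) => if P i then -((LinearMap.proj i).comp Z) else 0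
    | Sum.inr (Sum.inr (Sum.inl (Sum.inr i))) => if M i then (LinearMap.proj i).comp Z else 0
    | Sum.inr (Sum.inr (Sum.inr (Sum.inl i))) =>
        if s i = -1 then 0 else -((LinearMap.proj i).comp Z)
    | Sum.inr (Sum.inr (Sum.inr (Sum.inr i))) =>
        if s i = 1 then 0 else (LinearMap.proj i).comp Z
    with hF
  set d : ℝ → (Fin n ⊕ ((Fin N ⊕ Fin N) ⊕ ((Fin m ⊕ Fin m) ⊕ (Fin m ⊕ Fin m)))) → ℝ :=
    fun γ' l =>
    match l with
    | Sum.inl j' => c j' - f j' vR + f j' (π eI)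
    | Sum.inr (Sum.inl (Sum.inl _)) => 0
    | Sum.inr (Sum.inl (Sum.inr _)) => 0
    | Sum.inr (Sum.inr (Sum.inl (Sum.inl i))) => if P i then η i / 2 - ε₁ else 0
    | Sum.inr (Sum.inr (Sum.inl (Sum.inr i))) => if M i then η i / 2 - ε₁ else 0
    | Sum.inr (Sum.inr (Sum.inr (Sum.inl i))) =>
        (if s i = -1 then 0 else if s i = 1 then -(η i) / 2 else η i / 2) + γ'
    | Sum.inr (Sum.inr (Sum.inr (Sum.inr i))) =>
        (if s i = 1 then 0 else if s i = -1 then -(η i) / 2 else η i / 2) + γ'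
    with hd
  have trans : ∀ γ' : ℝ, 0 ≤ γ' →
      ((∃ y : (Fin m ⊕ Fin N) → ℝ, ∀ l, F l y ≤ d γ' l) ↔
        (A0set π K I v ∩ Cset η ε₁ P M ∩ Bslack η s γ').Nonempty) := by
    intro γ' hγ'
    constructor
    · rintro ⟨y, hy⟩
      set z : Fin m → ℝ := fun i => y (Sum.inl i) with hz
      set t : Fin N → ℝ := fun j => y (Sum.inr j) with ht
      have hZy : Z y = z := rfl
      have hTy : T y = t := rfl
      have htτ : t ∈ tauCone I := by
        intro j
        constructor
        · have := hy (Sum.inr (Sum.inl (Sum.inl j)))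
          simp only [hF, hd, LinearMap.neg_apply, LinearMap.comp_apply, LinearMap.proj_apply] at this
          simpa [hTy] using this
        · intro hj
          have h1 := hy (Sum.inr (Sum.inl (Sum.inr j)))
          have h2 := hy (Sum.inr (Sum.inl (Sum.inl j)))
          simp only [hF, hd, if_neg hj, LinearMap.neg_apply, LinearMap.comp_apply,
            LinearMap.proj_apply] at h1 h2
          have : t j ≤ 0 := by simpa [hTy] using h1
          have h2' : 0 ≤ t j := by simpa [hTy] using h2
          linarith
      refine ⟨z, ⟨?_, ?_⟩, ?_⟩
      · rw [mem_A0set_iff]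
        refine ⟨t, htτ, ?_⟩
        intro j'
        have := hy (Sum.inl j')
        simp only [hF, hd, LinearMap.sub_apply, LinearMap.comp_apply] at this
        rw [hZy, hTy] at this
        have hexp : f j' (vR + z - π eI - π t)
            = f j' vR + f j' z - f j' (π eI) - f j' (π t) := by
          simp [map_add, map_sub]
        rw [show ((fun i => (v i : ℝ)) + z - π (fun j => if j ∈ I then (1:ℝ) else 0) - π t)
          = vR + z - π eI - π t from rfl]
        rw [hexp]
        linarith
      · intro i
        constructor
        · intro hPi
          have := hy (Sum.inr (Sum.inr (Sum.inl (Sum.inl i))))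
          simp only [hF, hd, if_pos hPi, LinearMap.neg_apply, LinearMap.comp_apply,
            LinearMap.proj_apply] at this
          rw [hZy] at this
          have : -(z i) ≤ η i / 2 - ε₁ := this
          linarith
        · intro hMi
          have := hy (Sum.inr (Sum.inr (Sum.inl (Sum.inr i))))
          simp only [hF, hd, if_pos hMi, LinearMap.comp_apply, LinearMap.proj_apply] at this
          rw [hZy] at this
          exact this
      · intro i
        have hlow := hy (Sum.inr (Sum.inr (Sum.inr (Sum.inl i))))
        have hup := hy (Sum.inr (Sum.inr (Sum.inr (Sum.inr i))))
        refine ⟨?_, ?_, ?_⟩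
        · intro hsi
          have hsi' : ¬ (s i = -1) := by rw [hsi]; decide
          simp only [hF, hd, if_neg hsi', if_pos hsi, LinearMap.neg_apply,
            LinearMap.comp_apply, LinearMap.proj_apply] at hlow
          rw [hZy] at hlow
          have : -(z i) ≤ -(η i) / 2 + γ' := hlow
          linarith
        · intro hsi
          have hsi' : ¬ (s i = 1) := by rw [hsi]; decide
          simp only [hF, hd, if_neg hsi', if_pos hsi, LinearMap.comp_apply,
            LinearMap.proj_apply] at hup
          rw [hZy] at hup
          linarith [hup]
        · intro hsi
          have h1 : ¬ (s i = 1) := by rw [hsi]; decide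
          have h2 : ¬ (s i = -1) := by rw [hsi]; decide
          simp only [hF, hd, if_neg h1, if_neg h2, LinearMap.neg_apply, LinearMap.comp_apply,
            LinearMap.proj_apply] at hlow hup
          rw [hZy] at hlow hup
          constructor
          · have : -(z i) ≤ η i / 2 + γ' := hlow
            linarith
          · linarith [hup]
    · rintro ⟨z, ⟨hzA, hzC⟩, hzB⟩
      rw [mem_A0set_iff] at hzA
      obtain ⟨t, htτ, htK⟩ := hzA
      refine ⟨Sum.elim z t, ?_⟩
      rintro (j' | ((j | j) | ((i | i) | (i | i))))
      · have hk := htK j'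
        have hZe : Z (Sum.elim z t) = z := rfl
        have hTe : T (Sum.elim z t) = t := rfl
        simp only [hF, hd, LinearMap.sub_apply, LinearMap.comp_apply]
        rw [hZe, hTe]
        have hexp : f j' ((fun i => (v i : ℝ)) + z - π (fun j => if j ∈ I then (1:ℝ) else 0)
            - π t) = f j' vR + f j' z - f j' (π eI) - f j' (π t) := by
          simp [map_add, map_sub, hvR, heI]
        rw [hexp] at hk
        linarith
      · simp only [hF, hd, LinearMap.neg_apply, LinearMap.comp_apply, LinearMap.proj_apply]
        have := (htτ j).1
        have hTe : T (Sum.elim z t) = t := rfl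
        rw [hTe]
        simpa using this
      · by_cases hj : j ∈ I
        · simp only [hF, hd, if_pos hj]
          simp
        · simp only [hF, hd, if_neg hj, LinearMap.comp_apply, LinearMap.proj_apply]
          have := (htτ j).2 hj
          have hTe : T (Sum.elim z t) = t := rfl
          rw [hTe, this]
      · by_cases hPi : P i
        · simp only [hF, hd, if_pos hPi, LinearMap.neg_apply, LinearMap.comp_apply,
            LinearMap.proj_apply]
          have hZe : Z (Sum.elim z t) = z := rfl
          rw [hZe]
          have := (hzC i).1 hPi
          linarith
        · simp only [hF, hd, if_neg hPi]
          simp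
      · by_cases hMi : M i
        · simp only [hF, hd, if_pos hMi, LinearMap.comp_apply, LinearMap.proj_apply]
          have hZe : Z (Sum.elim z t) = z := rfl
          rw [hZe]
          exact (hzC i).2 hMi
        · simp only [hF, hd, if_neg hMi]
          simp
      · rcases hsi : s i with h' | h' | h'
        · have h1 : ¬ (s i = 1) := by rw [hsi]; decide
          have h2 : ¬ (s i = -1) := by rw [hsi]; decide
          simp only [hF, hd, if_neg h1, if_neg h2, LinearMap.neg_apply, LinearMap.comp_apply,
            LinearMap.proj_apply]
          have hZe : Z (Sum.elim z t) = z := rfl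
          rw [hZe]
          have := ((hzB i).2.2 hsi).1
          linarith
        · replace hsi : s i = (-1 : SignType) := hsi
          simp only [hF, hd, if_pos hsi]
          have hge : (0:ℝ) ≤ γ' := hγ'
          simpa using hge
        · replace hsi : s i = (1 : SignType) := hsi
          have h2 : ¬ (s i = -1) := by rw [hsi]; decide
          simp only [hF, hd, if_neg h2, if_pos hsi, LinearMap.neg_apply, LinearMap.comp_apply,
            LinearMap.proj_apply]
          have hZe : Z (Sum.elim z t) = z := rfl
          rw [hZe]
          have := (hzB i).1 hsi
          linarith
      · rcases hsi : s i with h' | h' | h'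
        · have h1 : ¬ (s i = 1) := by rw [hsi]; decide
          have h2 : ¬ (s i = -1) := by rw [hsi]; decide
          simp only [hF, hd, if_neg h1, if_neg h2, LinearMap.comp_apply, LinearMap.proj_apply]
          have hZe : Z (Sum.elim z t) = z := rfl
          rw [hZe]
          have := ((hzB i).2.2 hsi).2
          linarith
        · replace hsi : s i = (-1 : SignType) := hsi
          have h1 : ¬ (s i = 1) := by rw [hsi]; decide
          simp only [hF, hd, if_neg h1, if_pos hsi, LinearMap.comp_apply, LinearMap.proj_apply]
          have hZe : Z (Sum.elim z t) = z := rfl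
          rw [hZe]
          have := (hzB i).2.1 hsi
          linarith
        · replace hsi : s i = (1 : SignType) := hsi
          simp only [hF, hd, if_pos hsi]
          have hge : (0:ℝ) ≤ γ' := hγ'
          simpa using hge
  -- apply the feasibility theorem
  have hfeas := feas F (d γ) ?_
  · exact (trans γ hγ).mp hfeas
  · intro δ hδ
    obtain ⟨y, hy⟩ := (trans (γ + δ) (by linarith)).mpr (h δ hδ)
    refine ⟨y, fun l => ?_⟩
    have hle : d (γ + δ) l ≤ d γ l + δ := by
      rcases l with j' | ((j | j) | ((i | i) | (i | i))) <;>
        simp only [hd] <;> linarith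
    linarith [hy l]

end KeySection

section RestSection
open Pointwise
open scoped Classical

theorem smove {N m : ℕ} (blk : Fin N → Fin m) (b : Fin N → ℤ)
    (π : (Fin N → ℝ) →ₗ[ℝ] (Fin m → ℝ))
    (hπ : ∀ (x : Fin N → ℝ) (i : Fin m),
      π x i = ∑ j ∈ Finset.univ.filter (fun j => blk j = i), (b j : ℝ) * x j)
    (K : Set (Fin m → ℝ)) (I : Finset (Fin N)) (v : Fin m → ℤ) (i : Fin m) (r : ℝ)
    (hP : 0 < r → ∃ j ∈ I, blk j = i ∧ 0 < b j)
    (hM : r < 0 → ∃ j ∈ I, blk j = i ∧ b j < 0)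
    {z : Fin m → ℝ} (hz : z ∈ A0set π K I v) :
    z + Pi.single i r ∈ A0set π K I v := by
  classical
  have main : ∀ j : Fin N, j ∈ I → blk j = i → ((b j : ℝ) ≠ 0) → 0 ≤ r / (b j : ℝ) →
      z + Pi.single i r ∈ A0set π K I v := by
    intro j hjI hjblk hbne hrb
    rw [mem_A0set_iff] at hz ⊢
    obtain ⟨t, htτ, htK⟩ := hz
    refine ⟨t + Pi.single j (r / (b j : ℝ)), ?_, ?_⟩
    · intro j''
      constructor
      · have h1 := (htτ j'').1
        have h2 : 0 ≤ (Pi.single j (r / (b j : ℝ)) : Fin N → ℝ) j'' := by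
          rcases eq_or_ne j'' j with rfl | hne
          · simpa using hrb
          · simp [Pi.single_apply, hne]
        simpa [Pi.add_apply] using add_nonneg h1 h2
      · intro hj''
        have h0 := (htτ j'').2 hj''
        have hne : j'' ≠ j := fun h => hj'' (h ▸ hjI)
        simp [Pi.add_apply, h0, Pi.single_apply, hne]
    · have hπs : π (Pi.single j (r / (b j : ℝ))) = Pi.single i r := by
        funext i'
        rw [hπ]
        by_cases hii : i' = i
        · subst hii
          rw [Finset.sum_eq_single j]
          · have : (Pi.single j (r / (b j : ℝ)) : Fin N → ℝ) j = r / (b j : ℝ) := by simp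
            rw [this]
            rw [show (Pi.single i' r : Fin m → ℝ) i' = r by simp]
            field_simp
          · intro j'' _ hne
            simp [Pi.single_apply, hne]
          · intro hnotmem
            exfalso
            exact hnotmem (by simp [hjblk])
        · have hrhs : (Pi.single i r : Fin m → ℝ) i' = 0 := by
            simp [Pi.single_apply, hii]
          rw [hrhs]
          apply Finset.sum_eq_zero
          intro j'' hj''
          have hblk : blk j'' = i' := by simpa using hj''
          have hne : j'' ≠ j := by
            intro h; subst h; exact hii (by rw [← hblk, hjblk])
          simp [Pi.single_apply, hne]
      rw [map_add, hπs]
      have heq : (fun i' => (v i' : ℝ)) + (z + Pi.single i r)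
          - π (fun j' => if j' ∈ I then (1:ℝ) else 0) - (π t + Pi.single i r)
          = (fun i' => (v i' : ℝ)) + z - π (fun j' => if j' ∈ I then (1:ℝ) else 0) - π t := by
        abel
      rw [heq]
      exact htK
  rcases lt_trichotomy r 0 with hr | hr | hr
  · obtain ⟨j, hjI, hjblk, hbj⟩ := hM hr
    have hb : ((b j : ℝ)) < 0 := by exact_mod_cast hbj
    exact main j hjI hjblk (ne_of_lt hb) (div_nonneg_of_nonpos hr.le hb.le)
  · subst hr
    simpa using hz
  · obtain ⟨j, hjI, hjblk, hbj⟩ := hP hr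
    have hb : (0:ℝ) < (b j : ℝ) := by exact_mod_cast hbj
    exact main j hjI hjblk (ne_of_gt hb) (div_nonneg hr.le hb.le)

theorem move {N m : ℕ} (blk : Fin N → Fin m) (b : Fin N → ℤ)
    (π : (Fin N → ℝ) →ₗ[ℝ] (Fin m → ℝ))
    (hπ : ∀ (x : Fin N → ℝ) (i : Fin m),
      π x i = ∑ j ∈ Finset.univ.filter (fun j => blk j = i), (b j : ℝ) * x j)
    (K : Set (Fin m → ℝ)) (I : Finset (Fin N)) (v : Fin m → ℤ) (w : Fin m → ℝ)
    (hw1 : ∀ i, 0 < w i → ∃ j ∈ I, blk j = i ∧ 0 < b j)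
    (hw2 : ∀ i, w i < 0 → ∃ j ∈ I, blk j = i ∧ b j < 0)
    {z : Fin m → ℝ} (hz : z ∈ A0set π K I v) :
    z + w ∈ A0set π K I v := by
  classical
  have hgen : ∀ S : Finset (Fin m), z + ∑ i ∈ S, Pi.single i (w i) ∈ A0set π K I v := by
    intro S
    induction S using Finset.induction_on with
    | empty => simpa using hz
    | insert _ _ ha ih =>
      rename_i a S'
      rw [Finset.sum_insert ha]
      have hres := smove blk b π hπ K I v a (w a) (hw1 a) (hw2 a) ih
      have heq : z + (Pi.single a (w a) + ∑ i ∈ S', Pi.single i (w i))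
          = (z + ∑ i ∈ S', Pi.single i (w i)) + Pi.single a (w a) := by abel
      rw [heq]
      exact hres
  have := hgen Finset.univ
  rwa [Finset.univ_sum_single] at this

theorem convex_A0set {N m n : ℕ} (π : (Fin N → ℝ) →ₗ[ℝ] (Fin m → ℝ))
    (f : Fin n → ((Fin m → ℝ) →ₗ[ℝ] ℝ)) (c : Fin n → ℝ)
    (I : Finset (Fin N)) (v : Fin m → ℤ) :
    Convex ℝ (A0set π {x | ∀ j, f j x ≤ c j} I v) := by
  intro z1 hz1 z2 hz2 a b' ha hb hab
  rw [mem_A0set_iff] at hz1 hz2 ⊢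
  obtain ⟨t1, ht1, hk1⟩ := hz1
  obtain ⟨t2, ht2, hk2⟩ := hz2
  refine ⟨a • t1 + b' • t2, ?_, ?_⟩
  · intro j
    constructor
    · have := add_nonneg (mul_nonneg ha (ht1 j).1) (mul_nonneg hb (ht2 j).1)
      simpa [Pi.add_apply, Pi.smul_apply, smul_eq_mul] using this
    · intro hj
      simp [Pi.add_apply, Pi.smul_apply, (ht1 j).2 hj, (ht2 j).2 hj]
  · intro j'
    have h1 := hk1 j'
    have h2 := hk2 j'
    set eI : Fin N → ℝ := fun j => if j ∈ I then (1:ℝ) else 0 with heI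
    set vR : Fin m → ℝ := fun i => (v i : ℝ) with hvR
    have hexp : vR + (a • z1 + b' • z2) - π eI - π (a • t1 + b' • t2)
        = a • (vR + z1 - π eI - π t1) + b' • (vR + z2 - π eI - π t2) := by
      rw [map_add, map_smul, map_smul]
      match_scalars <;> linarith
    have hfold : ((fun i => (v i : ℝ)) + (a • z1 + b' • z2) - π eI - π (a • t1 + b' • t2))
        = a • (vR + z1 - π eI - π t1) + b' • (vR + z2 - π eI - π t2) := hexp
    rw [hfold]
    rw [map_add, map_smul, map_smul]
    have ha1 : a * f j' (vR + z1 - π eI - π t1) ≤ a * c j' := mul_le_mul_of_nonneg_left h1 ha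
    have ha2 : b' * f j' (vR + z2 - π eI - π t2) ≤ b' * c j' := mul_le_mul_of_nonneg_left h2 hb
    have : a * c j' + b' * c j' = c j' := by rw [← add_mul, hab, one_mul]
    simp only [smul_eq_mul]
    linarith

theorem convex_Cset {m : ℕ} (η : Fin m → ℝ) (ε : ℝ) (P M : Fin m → Prop) :
    Convex ℝ (Cset η ε P M) := by
  intro z1 h1 z2 h2 a b ha hb hab i
  have e1 := h1 i
  have e2 := h2 i
  constructor
  · intro hPi
    have q1 := e1.1 hPi
    have q2 := e2.1 hPi
    have hsum : a * (-(η i) / 2 + ε) + b * (-(η i) / 2 + ε) = -(η i) / 2 + ε := by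
      rw [← add_mul, hab, one_mul]
    simp only [Pi.add_apply, Pi.smul_apply, smul_eq_mul]
    linarith [mul_le_mul_of_nonneg_left q1 ha, mul_le_mul_of_nonneg_left q2 hb, hsum]
  · intro hMi
    have q1 := e1.2 hMi
    have q2 := e2.2 hMi
    have hsum : a * (η i / 2 - ε) + b * (η i / 2 - ε) = η i / 2 - ε := by
      rw [← add_mul, hab, one_mul]
    simp only [Pi.add_apply, Pi.smul_apply, smul_eq_mul]
    linarith [mul_le_mul_of_nonneg_left q1 ha, mul_le_mul_of_nonneg_left q2 hb, hsum]

theorem convex_cube {m : ℕ} (ε : ℝ) : Convex ℝ {u : Fin m → ℝ | ∀ i, |u i| ≤ ε} := by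
  intro u1 h1 u2 h2 a b ha hb hab i
  have e1 := abs_le.mp (h1 i)
  have e2 := abs_le.mp (h2 i)
  simp only [Pi.add_apply, Pi.smul_apply, smul_eq_mul]
  rw [abs_le]
  have hsum : a * ε + b * ε = ε := by rw [← add_mul, hab, one_mul]
  constructor <;> linarith [mul_le_mul_of_nonneg_left e1.2 ha, mul_le_mul_of_nonneg_left e2.2 hb,
    mul_le_mul_of_nonneg_left e1.1 ha, mul_le_mul_of_nonneg_left e2.1 hb, hsum]

theorem pattern_iff {N m : ℕ} (blk : Fin N → Fin m) (b : Fin N → ℤ)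
    (π : (Fin N → ℝ) →ₗ[ℝ] (Fin m → ℝ)) (η : Fin m → ℝ) (K : Set (Fin m → ℝ))
    (I : Finset (Fin N)) (v : Fin m → ℤ) (s : Fin m → SignType) :
    s ∈ signPattern blk b π η K I v ↔
      ((A0set π K I v ∩ thickCone η s).Nonempty ∧ ∀ i,
        ((∃ j ∈ I, blk j = i ∧ 0 < b j) → s i ≠ -1) ∧
        ((∃ j ∈ I, blk j = i ∧ b j < 0) → s i ≠ 1)) := by
  unfold signPattern
  simp only [Set.mem_setOf_eq]
  constructor
  · rintro ⟨⟨x, hxK, bb, hbb, hxeq⟩, hcomp⟩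
    refine ⟨⟨bb, ?_, hbb⟩, hcomp⟩
    show (fun i => (v i : ℝ)) + bb ∈ KofI π K I
    rw [← hxeq]
    exact hxK
  · rintro ⟨⟨z, hzA, hzTC⟩, hcomp⟩
    exact ⟨⟨(fun i => (v i : ℝ)) + z, hzA, z, hzTC, rfl⟩, hcomp⟩

end RestSection

/-- **Proposition (existence of the sign-pattern witness `K_{I,v}`).**
There is a closed convex set `K_{I,v}` whose intersection pattern with the thick
cones `𝔹_s` realizes the sign pattern `𝕊_{K,I,v}`, and which meets the interior
of `𝔹_s` whenever it meets `𝔹_s`. -/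
theorem exists_sign_pattern_witness
    {N m : ℕ}
    (blk : Fin N → Fin m) (b : Fin N → ℤ)
    (hb0 : ∀ j, b j ≠ 0)
    (hbal : ∀ i : Fin m, ∑ j ∈ Finset.univ.filter (fun j => blk j = i), b j = 0)
    (π : (Fin N → ℝ) →ₗ[ℝ] (Fin m → ℝ))
    (hπ : ∀ (x : Fin N → ℝ) (i : Fin m),
      π x i = ∑ j ∈ Finset.univ.filter (fun j => blk j = i), (b j : ℝ) * x j)
    (η : Fin m → ℝ)
    (hη : ∀ i, η i = ∑ j ∈ Finset.univ.filter (fun j => blk j = i ∧ 0 < b j), (b j : ℝ))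
    (hηpos : ∀ i, 0 < η i)
    (K : Set (Fin m → ℝ)) (hKne : K.Nonempty)
    -- `K` is a closed convex polyhedron
    (hKpoly : ∃ (n : ℕ) (f : Fin n → ((Fin m → ℝ) →ₗ[ℝ] ℝ)) (c : Fin n → ℝ),
      K = {x | ∀ j, f j x ≤ c j})
    (I : Finset (Fin N)) (v : Fin m → ℤ) :
    ∃ K' : Set (Fin m → ℝ), IsClosed K' ∧ Convex ℝ K' ∧
      ∀ s : Fin m → SignType,
        (s ∈ signPattern blk b π η K I v ↔ (K' ∩ thickCone η s).Nonempty) ∧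
        ((K' ∩ thickCone η s).Nonempty →
          (K' ∩ interior (thickCone η s)).Nonempty) := by
  classical
  obtain ⟨n, f, c, hK⟩ := hKpoly
  subst hK
  set Pd : Fin m → Prop := fun i => ∃ j ∈ I, blk j = i ∧ 0 < b j with hPdd
  set Md : Fin m → Prop := fun i => ∃ j ∈ I, blk j = i ∧ b j < 0 with hMdd
  -- choose ε₁
  obtain ⟨ε₁, hε₁pos, hε₁⟩ : ∃ ε : ℝ, 0 < ε ∧ ∀ i, ε ≤ η i / 2 := by
    rcases isEmpty_or_nonempty (Fin m) with hm | hm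
    · exact ⟨1, one_pos, fun i => (IsEmpty.false i).elim⟩
    · obtain ⟨i₀, _, hmin⟩ := Finset.exists_min_image Finset.univ (fun i => η i / 2)
        ⟨Classical.arbitrary _, Finset.mem_univ _⟩
      exact ⟨η i₀ / 2, by linarith [hηpos i₀], fun i => hmin i (Finset.mem_univ i)⟩
  set A0 := A0set π {x | ∀ j, f j x ≤ c j} I v with hA0
  set Cs := Cset η ε₁ Pd Md with hCsdef
  -- choose per-sign slacks
  have hdd : ∀ s : Fin m → SignType, ∃ e : ℝ, 0 < e ∧
      (¬ (A0 ∩ Cs ∩ Bslack η s 0).Nonempty → ¬ (A0 ∩ Cs ∩ Bslack η s e).Nonempty) := by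
    intro s
    by_cases hQ : (A0 ∩ Cs ∩ Bslack η s 0).Nonempty
    · exact ⟨1, one_pos, fun hc => absurd hQ hc⟩
    · have hnall : ¬ ∀ δ : ℝ, 0 < δ → (A0 ∩ Cs ∩ Bslack η s (0 + δ)).Nonempty := by
        intro hall
        exact hQ (KEY π f c I v η ε₁ Pd Md s 0 le_rfl hall)
      push_neg at hnall
      obtain ⟨δ, hδpos, hδ⟩ := hnall
      rw [zero_add] at hδ
      exact ⟨δ, hδpos, fun _ => by rw [hδ]; exact Set.not_nonempty_empty⟩
  choose dd hddpos hddprop using hdd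
  -- choose ε₂
  obtain ⟨e1, he1pos, he1⟩ : ∃ e : ℝ, 0 < e ∧ ∀ s : Fin m → SignType, e ≤ dd s := by
    obtain ⟨s₀, _, hmin⟩ := Finset.exists_min_image Finset.univ dd
      ⟨Classical.arbitrary _, Finset.mem_univ _⟩
    exact ⟨dd s₀, hddpos s₀, fun s => hmin s (Finset.mem_univ s)⟩
  obtain ⟨e2, he2pos, he2⟩ : ∃ e : ℝ, 0 < e ∧ ∀ i, e ≤ η i := by
    rcases isEmpty_or_nonempty (Fin m) with hm | hm
    · exact ⟨1, one_pos, fun i => (IsEmpty.false i).elim⟩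
    · obtain ⟨i₀, _, hmin⟩ := Finset.exists_min_image Finset.univ η
        ⟨Classical.arbitrary _, Finset.mem_univ _⟩
      exact ⟨η i₀, hηpos i₀, fun i => hmin i (Finset.mem_univ i)⟩
  set ε₂ : ℝ := min e1 e2 with hε₂def
  have hε₂pos : 0 < ε₂ := lt_min he1pos he2pos
  have hε₂dd : ∀ s, ε₂ ≤ dd s := fun s => le_trans (min_le_left _ _) (he1 s)
  have hε₂η : ∀ i, ε₂ ≤ η i := fun i => le_trans (min_le_right _ _) (he2 i)
  set Qc : Set (Fin m → ℝ) := {u | ∀ i, |u i| ≤ ε₂} with hQcdef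
  set K' : Set (Fin m → ℝ) := closure ((A0 ∩ Cs) + Qc) with hK'def
  -- from K' meeting 𝔹ₛ to the exact system
  have hQ0 : ∀ s : Fin m → SignType, (K' ∩ thickCone η s).Nonempty →
      (A0 ∩ Cs ∩ Bslack η s 0).Nonempty := by
    rintro s ⟨x, hxK', hxTC⟩
    have hδall : ∀ δ : ℝ, 0 < δ → (A0 ∩ Cs ∩ Bslack η s (ε₂ + δ)).Nonempty := by
      intro δ hδ
      obtain ⟨x', hx'mem, hx'dist⟩ := Metric.mem_closure_iff.mp hxK' δ hδ
      obtain ⟨aa, haa, u, hu, hx'eq⟩ := hx'mem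
      refine ⟨aa, haa, ?_⟩
      intro i
      have hxi := (mem_thickCone η hηpos s x).mp hxTC i
      have hdist := dist_le_pi_dist x x' i
      rw [Real.dist_eq] at hdist
      have habs : |x i - x' i| < δ := lt_of_le_of_lt hdist hx'dist
      have hb2 := abs_lt.mp habs
      have hb1 := abs_le.mp (hu i)
      have hai : aa i = x' i - u i := by
        rw [← hx'eq]; simp [Pi.add_apply]
      refine ⟨fun hsi => ?_, fun hsi => ?_, fun hsi => ?_⟩
      · have := hxi.1 hsi
        rw [hai]; linarith
      · have := hxi.2.1 hsi
        rw [hai]; linarith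
      · have := hxi.2.2 hsi
        rw [hai]; exact ⟨by linarith [this.1], by linarith [this.2]⟩
    have hQε := KEY π f c I v η ε₁ Pd Md s ε₂ hε₂pos.le hδall
    by_contra hc
    obtain ⟨w, hw1, hw2⟩ := hQε
    exact (hddprop s hc) ⟨w, hw1, Bslack_mono η s (hε₂dd s) hw2⟩
  -- clamping: from the sign pattern to the exact system
  have hclamp : ∀ s : Fin m → SignType,
      s ∈ signPattern blk b π η {x | ∀ j, f j x ≤ c j} I v →
      (A0 ∩ Cs ∩ Bslack η s 0).Nonempty := by
    intro s hs
    rw [pattern_iff] at hs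
    obtain ⟨⟨x, hxA, hxTC⟩, hcomp⟩ := hs
    set z' : Fin m → ℝ := fun i =>
      if Pd i then (if Md i then max (-(η i) / 2 + ε₁) (min (x i) (η i / 2 - ε₁))
        else max (x i) (-(η i) / 2 + ε₁))
      else (if Md i then min (x i) (η i / 2 - ε₁) else x i) with hz'def
    -- basic value facts
    have hvPM : ∀ i, Pd i → Md i →
        z' i = max (-(η i) / 2 + ε₁) (min (x i) (η i / 2 - ε₁)) := by
      intro i h1 h2; simp only [hz'def]; rw [if_pos h1, if_pos h2]
    have hvP : ∀ i, Pd i → ¬ Md i → z' i = max (x i) (-(η i) / 2 + ε₁) := by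
      intro i h1 h2; simp only [hz'def]; rw [if_pos h1, if_neg h2]
    have hvM : ∀ i, ¬ Pd i → Md i → z' i = min (x i) (η i / 2 - ε₁) := by
      intro i h1 h2; simp only [hz'def]; rw [if_neg h1, if_pos h2]
    have hvN : ∀ i, ¬ Pd i → ¬ Md i → z' i = x i := by
      intro i h1 h2; simp only [hz'def]; rw [if_neg h1, if_neg h2]
    have hlow : ∀ i, ¬ Md i → x i ≤ z' i := by
      intro i hMi
      by_cases hPi : Pd i
      · rw [hvP i hPi hMi]; exact le_max_left _ _
      · rw [hvN i hPi hMi]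
    have hup : ∀ i, ¬ Pd i → z' i ≤ x i := by
      intro i hPi
      by_cases hMi : Md i
      · rw [hvM i hPi hMi]; exact min_le_left _ _
      · rw [hvN i hPi hMi]
    have hA' : z' ∈ A0 := by
      have hxw : x + (fun i => z' i - x i) = z' := by funext i; simp
      rw [← hxw]
      apply move blk b π hπ _ I v _ ?_ ?_ hxA
      · intro i hgt
        by_contra hPi
        have := hup i hPi
        linarith
      · intro i hlt
        by_contra hMi
        have := hlow i hMi
        linarith
    have hC' : z' ∈ Cs := by
      intro i
      constructor
      · intro hPi
        by_cases hMi : Md i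
        · rw [hvPM i hPi hMi]; exact le_max_left _ _
        · rw [hvP i hPi hMi]; exact le_max_right _ _
      · intro hMi
        by_cases hPi : Pd i
        · rw [hvPM i hPi hMi]
          apply max_le
          · linarith [hε₁ i]
          · exact min_le_right _ _
        · rw [hvM i hPi hMi]; exact min_le_right _ _
    have hB' : z' ∈ Bslack η s 0 := by
      intro i
      have hxi := (mem_thickCone η hηpos s x).mp hxTC i
      have hηi := hηpos i
      have hε₁i := hε₁ i
      refine ⟨fun hsi => ?_, fun hsi => ?_, fun hsi => ?_⟩
      · -- s i = 1, so ¬ Md i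
        have hMi : ¬ Md i := fun h => (hcomp i).2 h hsi
        have := hxi.1 hsi
        have := hlow i hMi
        linarith [hxi.1 hsi, hlow i hMi]
      · -- s i = -1, so ¬ Pd i
        have hPi : ¬ Pd i := fun h => (hcomp i).1 h hsi
        linarith [hxi.2.1 hsi, hup i hPi]
      · -- s i = 0
        obtain ⟨hx1, hx2⟩ := hxi.2.2 hsi
        by_cases hPi : Pd i <;> by_cases hMi : Md i
        · rw [hvPM i hPi hMi]
          constructor
          · have : -(η i) / 2 ≤ -(η i) / 2 + ε₁ := by linarith
            linarith [le_max_left (-(η i) / 2 + ε₁) (min (x i) (η i / 2 - ε₁))]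
          · have h1 : -(η i) / 2 + ε₁ ≤ η i / 2 := by linarith
            have h2 : min (x i) (η i / 2 - ε₁) ≤ η i / 2 := by
              linarith [min_le_right (x i) (η i / 2 - ε₁)]
            have := max_le h1 h2
            linarith
        · rw [hvP i hPi hMi]
          constructor
          · linarith [le_max_left (x i) (-(η i) / 2 + ε₁)]
          · have := max_le hx2 (show -(η i) / 2 + ε₁ ≤ η i / 2 by linarith)
            linarith
        · rw [hvM i hPi hMi]
          constructor
          · have := le_min hx1 (show -(η i) / 2 ≤ η i / 2 - ε₁ by linarith)
            linarith
          · linarith [min_le_left (x i) (η i / 2 - ε₁)]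
        · rw [hvN i hPi hMi]
          exact ⟨by linarith, by linarith⟩
    exact ⟨z', ⟨hA', hC'⟩, hB'⟩
  -- from the exact system back to the sign pattern
  have hpat : ∀ s : Fin m → SignType, (A0 ∩ Cs ∩ Bslack η s 0).Nonempty →
      s ∈ signPattern blk b π η {x | ∀ j, f j x ≤ c j} I v := by
    rintro s ⟨z, ⟨hzA, hzC⟩, hzB⟩
    rw [pattern_iff]
    constructor
    · refine ⟨z, hzA, ?_⟩
      rw [← Bslack_zero η hηpos s]
      exact hzB
    · intro i
      constructor
      · intro hPi hsi
        have h1 := (hzC i).1 hPi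
        have h2 := (hzB i).2.1 hsi
        linarith
      · intro hMi hsi
        have h1 := (hzC i).2 hMi
        have h2 := (hzB i).1 hsi
        linarith
  -- the exact system sits inside K' ∩ 𝔹ₛ
  have hsub : ∀ s : Fin m → SignType, (A0 ∩ Cs ∩ Bslack η s 0) ⊆ K' ∩ thickCone η s := by
    intro s z hz
    constructor
    · apply subset_closure
      refine ⟨z, hz.1, 0, ?_, add_zero z⟩
      intro i
      simp [hε₂pos.le]
    · rw [← Bslack_zero η hηpos s]
      exact hz.2
  -- interior points
  have hint : ∀ s : Fin m → SignType, (A0 ∩ Cs ∩ Bslack η s 0).Nonempty →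
      (K' ∩ interior (thickCone η s)).Nonempty := by
    rintro s ⟨z, hzAC, hzB⟩
    set u : Fin m → ℝ := fun i => if s i = 1 then ε₂ / 2 else if s i = -1 then -(ε₂ / 2)
      else (if η i / 2 - ε₂ / 2 < z i then -(ε₂ / 2)
        else if z i < -(η i) / 2 + ε₂ / 2 then ε₂ / 2 else 0) with hudef
    have huQc : u ∈ Qc := by
      intro i
      have : u i = ε₂ / 2 ∨ u i = -(ε₂ / 2) ∨ u i = 0 := by
        simp only [hudef]
        split_ifs <;> tauto
      rcases this with h | h | h <;> rw [h, abs_le] <;> constructor <;> linarith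
    refine ⟨z + u, ?_, ?_⟩
    · apply subset_closure
      exact ⟨z, hzAC, u, huQc, rfl⟩
    · rw [mem_interior_thickCone η hηpos]
      intro i
      have hzBi := hzB i
      have hηi := hηpos i
      have hε₂ηi := hε₂η i
      refine ⟨fun hsi => ?_, fun hsi => ?_, fun hsi => ?_⟩
      · have hz1 := hzBi.1 hsi
        have hui : u i = ε₂ / 2 := by simp only [hudef]; rw [if_pos hsi]
        simp only [Pi.add_apply, hui]
        linarith
      · have hz1 := hzBi.2.1 hsi
        have hne : ¬ (s i = 1) := by rw [hsi]; decide
        have hui : u i = -(ε₂ / 2) := by simp only [hudef]; rw [if_neg hne, if_pos hsi]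
        simp only [Pi.add_apply, hui]
        linarith
      · obtain ⟨hz1, hz2⟩ := hzBi.2.2 hsi
        have hne1 : ¬ (s i = 1) := by rw [hsi]; decide
        have hne2 : ¬ (s i = -1) := by rw [hsi]; decide
        have hui : u i = (if η i / 2 - ε₂ / 2 < z i then -(ε₂ / 2)
            else if z i < -(η i) / 2 + ε₂ / 2 then ε₂ / 2 else 0) := by
          simp only [hudef]; rw [if_neg hne1, if_neg hne2]
        by_cases hc1 : η i / 2 - ε₂ / 2 < z i
        · rw [if_pos hc1] at hui
          simp only [Pi.add_apply, hui]
          constructor <;> linarith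
        · rw [if_neg hc1] at hui
          by_cases hc2 : z i < -(η i) / 2 + ε₂ / 2
          · rw [if_pos hc2] at hui
            simp only [Pi.add_apply, hui]
            constructor <;> linarith
          · rw [if_neg hc2] at hui
            simp only [Pi.add_apply, hui]
            push_neg at hc1 hc2
            constructor <;> linarith
  refine ⟨K', isClosed_closure, ?_, ?_⟩
  · exact (((convex_A0set π f c I v).inter (convex_Cset η ε₁ Pd Md)).add
      (convex_cube ε₂)).closure
  · intro s
    refine ⟨⟨fun hs => ?_, fun hne => hpat s (hQ0 s hne)⟩, fun hne => hint s (hQ0 s hne)⟩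
    obtain ⟨z, hz⟩ := hclamp s hs
    exact ⟨z, hsub s hz⟩
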